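/- Let E = {x ∈ ℝⁿ : x₁²/ℓ₁² + ⋯ + x_n²/ℓ_n² < 1} be an open ellipsoid with semi-axes ℓ₁, …, ℓ_n > 0, and let a = (0, …, 0, −α) with 0 ≤ α < ℓ_n. Then |(E − a)°| = (ℓ_n^{(n−1)/2} / (ℓ₁⋯ℓ_{n−1})) · |B(0,1)| / [(ℓ_n − α)(2 − (ℓ_n − α)/ℓ_n)]^{(n+1)/2}. -/

import Mathlib

set_option maxHeartbeats 1000000


open scoped RealInnerProductSpace
open MeasureTheory

/-- The polar of a set `S ⊆ ℝⁿ`. -/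
def realPolar {n : ℕ} (S : Set (EuclideanSpace ℝ (Fin n))) :
    Set (EuclideanSpace ℝ (Fin n)) :=
  {y | ∀ x ∈ S, ⟪x, y⟫ ≤ 1}

/-- For the open ellipsoid `E` with semi-axes `ℓ i > 0`
(here `n = m+1`, last axis `ℓₙ = ℓ (Fin.last m)`) and `a = -α eₙ` with
`0 ≤ α < ℓₙ`:
`|(E-a)°| = (ℓₙ^{(n-1)/2}/(ℓ₁⋯ℓ_{n-1})) |B(0,1)| / ((ℓₙ-α)(2-(ℓₙ-α)/ℓₙ))^{(n+1)/2}`. -/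
theorem stmt10 {m : ℕ} (ℓ : Fin (m + 1) → ℝ) (hℓ : ∀ i, 0 < ℓ i)
    (α : ℝ) (hα0 : 0 ≤ α) (hα1 : α < ℓ (Fin.last m))
    (a : EuclideanSpace ℝ (Fin (m + 1)))
    (haof : a = (-α) • EuclideanSpace.single (Fin.last m) (1 : ℝ))
    (E : Set (EuclideanSpace ℝ (Fin (m + 1))))
    (hE : E = {x | (∑ i, (x i) ^ 2 / (ℓ i) ^ 2) < 1}) :
    volume (realPolar ((fun x => x - a) '' E))
      = ENNReal.ofReal
          ((ℓ (Fin.last m)) ^ ((m : ℝ) / 2) / (∏ i : Fin m, ℓ i.castSucc)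
            * (volume (Metric.ball (0 : EuclideanSpace ℝ (Fin (m + 1))) 1)).toReal
            / (((ℓ (Fin.last m) - α) * (2 - (ℓ (Fin.last m) - α) / ℓ (Fin.last m)))
                ^ (((m : ℝ) + 2) / 2))) := by
  set L := ℓ (Fin.last m) with hLdef
  have hL : 0 < L := hℓ _
  set s : ℝ := L ^ 2 - α ^ 2 with hsdef
  have hs : 0 < s := by nlinarith
  have hinner : ∀ x y : EuclideanSpace ℝ (Fin (m + 1)), ⟪x, y⟫ = ∑ i, x i * y i := by
    intro x y; simp [PiLp.inner_apply, RCLike.inner_apply, mul_comm]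
  -- the supremum characterization
  have hsup : ∀ (z : EuclideanSpace ℝ (Fin (m + 1))) (t : ℝ),
      (∀ y ∈ E, ⟪y, z⟫ ≤ t) ↔ Real.sqrt (∑ i, (ℓ i) ^ 2 * (z i) ^ 2) ≤ t := by
    intro z t
    set P := ∑ i, (ℓ i) ^ 2 * (z i) ^ 2 with hPdef
    have hP0 : 0 ≤ P := Finset.sum_nonneg fun i _ => by positivity
    constructor
    · intro h
      by_contra hc
      push_neg at hc
      have h0E : (0 : EuclideanSpace ℝ (Fin (m + 1))) ∈ E := by
        rw [hE]; simp
      have ht0 : 0 ≤ t := by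
        have := h 0 h0E
        rw [hinner] at this
        simpa using this
      have hPpos : 0 < P := by
        rcases lt_or_eq_of_le hP0 with h' | h'
        · exact h'
        · rw [← h', Real.sqrt_zero] at hc; linarith
      have hsP : 0 < Real.sqrt P := Real.sqrt_pos.2 hPpos
      obtain ⟨r, hr1, hr2⟩ :=
        exists_between (show t / Real.sqrt P < 1 from (div_lt_one hsP).2 hc)
      have hr0 : 0 ≤ r := le_trans (div_nonneg ht0 hsP.le) hr1.le
      set y : EuclideanSpace ℝ (Fin (m + 1)) :=
        (EuclideanSpace.equiv (Fin (m + 1)) ℝ).symm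
          (fun i => r / Real.sqrt P * (ℓ i ^ 2 * z i)) with hydef
      have hy : ∀ i, y i = r / Real.sqrt P * (ℓ i ^ 2 * z i) := fun i => rfl
      have hsq : Real.sqrt P ^ 2 = P := Real.sq_sqrt hPpos.le
      have hymem : y ∈ E := by
        rw [hE]; simp only [Set.mem_setOf_eq]
        have e1 : ∀ i : Fin (m + 1),
            (y i) ^ 2 / (ℓ i) ^ 2 = (r / Real.sqrt P) ^ 2 * ((ℓ i) ^ 2 * (z i) ^ 2) := by
          intro i
          rw [hy]
          have := (hℓ i).ne'
          field_simp
        rw [Finset.sum_congr rfl fun i _ => e1 i, ← Finset.mul_sum, ← hPdef]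
        have : (r / Real.sqrt P) ^ 2 * P = r ^ 2 := by
          rw [div_pow, hsq]
          field_simp
        rw [this]
        nlinarith
      have hyz : ⟪y, z⟫ = r * Real.sqrt P := by
        rw [hinner]
        have e2 : ∀ i : Fin (m + 1),
            y i * z i = r / Real.sqrt P * ((ℓ i) ^ 2 * (z i) ^ 2) := by
          intro i; rw [hy]; ring
        rw [Finset.sum_congr rfl fun i _ => e2 i, ← Finset.mul_sum, ← hPdef]
        field_simp
        linear_combination (-r) * hsq
      have := h y hymem
      rw [hyz] at this
      have : t < r * Real.sqrt P := by
        have := (div_lt_iff₀ hsP).1 hr1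
        linarith
      linarith [h y hymem, hyz]
    · intro h y hy
      rw [hE] at hy
      simp only [Set.mem_setOf_eq] at hy
      set Q := ∑ i, (y i) ^ 2 / (ℓ i) ^ 2 with hQdef
      have hQ0 : 0 ≤ Q := Finset.sum_nonneg fun i _ => by positivity
      have cs := Finset.sum_mul_sq_le_sq_mul_sq Finset.univ
        (fun i => y i / ℓ i) (fun i => ℓ i * z i)
      simp only [div_pow, mul_pow] at cs
      have e2 : ∀ i : Fin (m + 1), y i / ℓ i * (ℓ i * z i) = y i * z i := by
        intro i
        have := (hℓ i).ne'
        field_simp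
      rw [Finset.sum_congr rfl fun i _ => e2 i] at cs
      -- cs : (∑ y i * z i)^2 ≤ Q * P
      have hQP : Q * P ≤ P := by nlinarith
      have h1 : ∑ i, y i * z i ≤ Real.sqrt P := by
        nlinarith [Real.sqrt_nonneg P, Real.sq_sqrt hP0,
          Real.sqrt_nonneg P]
      rw [hinner]
      linarith
  -- the diagonal map
  set d : Fin (m + 1) → ℝ :=
    fun i => if i = Fin.last m then s / L else ℓ i * (Real.sqrt s / L) with hddef
  set v : EuclideanSpace ℝ (Fin (m + 1)) :=
    (α / L) • EuclideanSpace.single (Fin.last m) (1 : ℝ) with hvdef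
  set A : EuclideanSpace ℝ (Fin (m + 1)) →ₗ[ℝ] EuclideanSpace ℝ (Fin (m + 1)) :=
    (Matrix.toEuclideanLin (Matrix.diagonal d) :
      EuclideanSpace ℝ (Fin (m + 1)) →ₗ[ℝ] EuclideanSpace ℝ (Fin (m + 1))) with hAdef
  have hAz : ∀ (z : EuclideanSpace ℝ (Fin (m + 1))) (i : Fin (m + 1)),
      (A z) i = d i * z i := by
    intro z i
    rw [hAdef]
    simp [Matrix.toEuclideanLin_apply, Matrix.mulVec_diagonal]
  have hvi : ∀ i : Fin (m + 1), v i = if i = Fin.last m then α / L else 0 := by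
    intro i
    rw [hvdef]
    by_cases hi : i = Fin.last m <;>
      simp [hi, EuclideanSpace.single_apply, mul_comm]
  have hss : Real.sqrt s ^ 2 = s := Real.sq_sqrt hs.le
  -- the set identity
  have hset : realPolar ((fun x => x - a) '' E)
      = A ⁻¹' Metric.closedBall (-v) 1 := by
    ext z
    simp only [realPolar, Set.mem_setOf_eq, Set.mem_preimage, Metric.mem_closedBall,
      dist_eq_norm, sub_neg_eq_add]
    have hav : ⟪a, z⟫ = -(α * z (Fin.last m)) := by
      rw [hinner]
      rw [haof]
      rw [Fin.sum_univ_castSucc]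
      have : ∀ i : Fin m,
          (((-α) • EuclideanSpace.single (Fin.last m) (1:ℝ)) i.castSucc) * z i.castSucc = 0 := by
        intro i
        simp [EuclideanSpace.single_apply, (Fin.castSucc_lt_last i).ne]
      rw [Finset.sum_congr rfl fun i _ => this i]
      simp [EuclideanSpace.single_apply]
    have e1 : (∀ x ∈ (fun x => x - a) '' E, ⟪x, z⟫ ≤ 1)
        ↔ ∀ y ∈ E, ⟪y, z⟫ ≤ 1 + ⟪a, z⟫ := by
      rw [Set.forall_mem_image]
      refine forall₂_congr fun y hy => ?_
      rw [inner_sub_left]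
      constructor <;> intro <;> linarith
    rw [e1, hav, hsup z]
    -- abbreviations
    set zn := z (Fin.last m) with hzn
    set W := ∑ i : Fin m, (ℓ i.castSucc) ^ 2 * (z i.castSucc) ^ 2 with hWdef
    have hW0 : 0 ≤ W := Finset.sum_nonneg fun i _ => by positivity
    have hPW : ∑ i, (ℓ i) ^ 2 * (z i) ^ 2 = W + L ^ 2 * zn ^ 2 := by
      rw [Fin.sum_univ_castSucc]
    have hnorm : ‖A z + v‖ = Real.sqrt ((s * W + (s * zn + α) ^ 2) / L ^ 2) := by
      rw [EuclideanSpace.norm_eq]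
      congr 1
      simp only [Real.norm_eq_abs, sq_abs]
      rw [Fin.sum_univ_castSucc]
      have e3 : ∀ i : Fin m,
          ((A z + v) i.castSucc) ^ 2 = s * ((ℓ i.castSucc) ^ 2 * (z i.castSucc) ^ 2) / L ^ 2 := by
        intro i
        have : (A z + v) i.castSucc = ℓ i.castSucc * (Real.sqrt s / L) * z i.castSucc := by
          rw [PiLp.add_apply, hAz, hvi, if_neg (Fin.castSucc_lt_last i).ne, hddef]
          simp [(Fin.castSucc_lt_last i).ne]
        rw [this]
        have hL' := hL.ne'
        field_simp
        rw [hss]; ring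
      rw [Finset.sum_congr rfl fun i _ => e3 i]
      have e4 : (A z + v) (Fin.last m) = (s * zn + α) / L := by
        rw [PiLp.add_apply, hAz, hvi, if_pos rfl, hddef]
        simp only [eq_self_iff_true, if_true, ↓reduceIte]
        field_simp
        rfl
      rw [e4, ← Finset.sum_div, ← Finset.mul_sum, ← hWdef, div_pow]
      ring
    rw [hnorm, hPW]
    rw [Real.sqrt_le_iff, Real.sqrt_le_iff]
    have hL2 : (0:ℝ) < L ^ 2 := by positivity
    constructor
    · rintro ⟨h1, h2⟩
      refine ⟨zero_le_one, ?_⟩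
      rw [one_pow, div_le_one hL2]
      have hid2 : s * L ^ 2 * zn ^ 2 = s * s * zn ^ 2 + s * α ^ 2 * zn ^ 2 := by
        rw [hsdef]; ring
      nlinarith [mul_le_mul_of_nonneg_left h2 hs.le, hid2, hsdef]
    · rintro ⟨-, h2⟩
      rw [one_pow, div_le_one hL2] at h2
      have h3 : W + s * zn ^ 2 + 2 * α * zn ≤ 1 := by
        have h4 : s * (W + s * zn ^ 2 + 2 * α * zn) ≤ s * 1 := by nlinarith
        exact (mul_le_mul_iff_right₀ hs).1 h4
      have h5 : 0 ≤ 1 + -(α * zn) := by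
        nlinarith [mul_nonneg hs.le (sq_nonneg zn)]
      exact ⟨h5, by nlinarith⟩
  -- determinant
  have hdcs : ∀ i : Fin m, d i.castSucc = ℓ i.castSucc * (Real.sqrt s / L) := by
    intro i; rw [hddef]; simp [(Fin.castSucc_lt_last i).ne]
  have hdet : LinearMap.det A = (∏ i : Fin m, ℓ i.castSucc) * (Real.sqrt s / L) ^ m * (s / L) := by
    rw [hAdef, Matrix.toEuclideanLin_eq_toLin, LinearMap.det_toLin, Matrix.det_diagonal]
    rw [Fin.prod_univ_castSucc]
    rw [Finset.prod_congr rfl fun i _ => hdcs i, Finset.prod_mul_distrib]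
    simp [hddef, div_pow]
  set P0 := ∏ i : Fin m, ℓ i.castSucc with hP0def
  have hP0pos : 0 < P0 := Finset.prod_pos fun i _ => hℓ _
  have hsqs : 0 < Real.sqrt s := Real.sqrt_pos.2 hs
  have hdetpos : 0 < LinearMap.det A := by
    rw [hdet]; positivity
  rw [hset, Measure.addHaar_preimage_linearMap volume hdetpos.ne' _,
    Measure.addHaar_closedBall volume _ zero_le_one]
  rw [finrank_euclideanSpace_fin]
  rw [one_pow, ENNReal.ofReal_one, one_mul]
  set B := (volume (Metric.ball (0 : EuclideanSpace ℝ (Fin (m + 1))) 1)).toReal with hBdef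
  have hBfin : volume (Metric.ball (0 : EuclideanSpace ℝ (Fin (m + 1))) 1) = ENNReal.ofReal B := by
    rw [hBdef, ENNReal.ofReal_toReal measure_ball_lt_top.ne]
  rw [hBfin, ← ENNReal.ofReal_mul (abs_nonneg _)]
  congr 1
  rw [abs_of_pos (inv_pos.2 hdetpos), hdet]
  -- real arithmetic
  have hq : (L - α) * (2 - (L - α) / L) = s / L := by
    rw [hsdef]; field_simp; ring
  rw [hq, Real.div_rpow hs.le hL.le]
  have hsqm : Real.sqrt s ^ m = s ^ ((m : ℝ) / 2) := by
    rw [← Real.rpow_natCast (Real.sqrt s) m, Real.sqrt_eq_rpow, ← Real.rpow_mul hs.le]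
    congr 1; ring
  have hsplit : s ^ (((m : ℝ) + 2) / 2) = s ^ ((m : ℝ) / 2) * s := by
    rw [show ((m : ℝ) + 2) / 2 = (m : ℝ) / 2 + 1 by ring, Real.rpow_add hs, Real.rpow_one]
  have hLsplit : L ^ (((m : ℝ) + 2) / 2) = L ^ (m + 1) / L ^ ((m : ℝ) / 2) := by
    rw [eq_div_iff (Real.rpow_pos_of_pos hL _).ne', ← Real.rpow_add hL,
      ← Real.rpow_natCast L (m + 1)]
    congr 1; push_cast; ring
  rw [hsplit, hLsplit, div_pow, hsqm]
  have h1 : s ^ ((m : ℝ) / 2) ≠ 0 := (Real.rpow_pos_of_pos hs _).ne'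
  have h2 : L ^ ((m : ℝ) / 2) ≠ 0 := (Real.rpow_pos_of_pos hL _).ne'
  have h3 : (L : ℝ) ^ m ≠ 0 := by positivity
  have h4 : (L : ℝ) ^ (m + 1) ≠ 0 := by positivity
  field_simp
  ring
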